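/- Suppose (U'₁,U'₂,<') is the result of applying a case II coherent extended Nielsen transformation to a coherent extended word equation (U₁,U₂,<). If (i,j) ∈ B'⁺, then (i,ν(i,j)) mirrors (1,1) with respect to (U₁,U₂,<). -/

import Mathlib

open scoped Classical

namespace ExtWordEq

/-- The type of (candidate) boundary orders: relations on pairs (i,j). -/
abbrev BRel : Type := ℕ × ℕ → ℕ × ℕ → Prop

variable {X : Type*}

/-- The `i`-th side of the word equation (`i = 1` gives `U₁`, anything else `U₂`). -/
def word (U₁ U₂ : List X) (i : ℕ) : List X := if i = 1 then U₁ else U₂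

/-- The variable `U_{i,j}` (1-indexed), as an optional value. -/
def letter (U₁ U₂ : List X) (b : ℕ × ℕ) : Option X := (word U₁ U₂ b.1)[b.2 - 1]?

/-- `b` is a boundary of the word equation `(U₁, U₂)`. -/
def Boundary (U₁ U₂ : List X) (b : ℕ × ℕ) : Prop :=
  (b.1 = 1 ∨ b.1 = 2) ∧ 1 ≤ b.2 ∧ b.2 ≤ (word U₁ U₂ b.1).length

/-- `b` is a boundary of `(U₁, U₂)` or one of the conventional boundaries `(1,0)`, `(2,0)`. -/
def EBoundary (U₁ U₂ : List X) (b : ℕ × ℕ) : Prop :=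
  (b.1 = 1 ∨ b.1 = 2) ∧ b.2 ≤ (word U₁ U₂ b.1).length

/-- Incomparability `a ≈ b` for a strict order. -/
def Incomp (lt : BRel) (a b : ℕ × ℕ) : Prop := ¬ lt a b ∧ ¬ lt b a

/-- `lt` is a boundary order for the word equation `(U₁, U₂)`:
a strict weak order on the boundaries (together with the conventional boundaries
`(1,0) ≈ (2,0)`), extending `(i,j) < (i,j+1)` and with `(1,m) ≈ (2,n)`. -/
structure BoundaryOrder (U₁ U₂ : List X) (lt : BRel) : Prop where
  irrefl : ∀ a, EBoundary U₁ U₂ a → ¬ lt a a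
  trans : ∀ a b c, EBoundary U₁ U₂ a → EBoundary U₁ U₂ b → EBoundary U₁ U₂ c →
    lt a b → lt b c → lt a c
  incomp_trans : ∀ a b c, EBoundary U₁ U₂ a → EBoundary U₁ U₂ b → EBoundary U₁ U₂ c →
    Incomp lt a b → Incomp lt b c → Incomp lt a c
  succ : ∀ i j : ℕ, EBoundary U₁ U₂ (i, j + 1) → lt (i, j) (i, j + 1)
  top : Incomp lt (1, U₁.length) (2, U₂.length)
  bot : Incomp lt (1, 0) (2, 0)

/-- `L(U_{i,1} U_{i,2} ⋯ U_{i,j})` where `L` is the additive extension of a length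
assignment on variables. -/
def prefixLen (U₁ U₂ : List X) (L : X → ℕ) (b : ℕ × ℕ) : ℕ :=
  (((word U₁ U₂ b.1).take b.2).map L).sum

/-- The extended word equation `(U₁, U₂, lt)` is coherent. -/
def Coherent (U₁ U₂ : List X) (lt : BRel) : Prop :=
  ∃ L : X → ℕ, (∀ x, 0 < L x) ∧
    ∀ a b, Boundary U₁ U₂ a → Boundary U₁ U₂ b →
      (lt a b ↔ prefixLen U₁ U₂ L a < prefixLen U₁ U₂ L b)

/-- The boundary `a` cuts the boundary `b`. -/
def Cuts (U₁ U₂ : List X) (lt : BRel) (a b : ℕ × ℕ) : Prop :=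
  Boundary U₁ U₂ a ∧ Boundary U₁ U₂ b ∧ a ≠ b ∧
    lt (a.1, a.2 - 1) b ∧ lt (b.1, b.2 - 1) a

/-- The boundary `a` mirrors the boundary `b`. -/
def Mirrors (U₁ U₂ : List X) (lt : BRel) (a b : ℕ × ℕ) : Prop :=
  Boundary U₁ U₂ a ∧ Boundary U₁ U₂ b ∧ letter U₁ U₂ a = letter U₁ U₂ b ∧
    (¬ Incomp lt a b ∨ ¬ Incomp lt (a.1, a.2 - 1) (b.1, b.2 - 1))

/-- Edge relation of the cut graph `G_{U₁,U₂,<}`. -/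
def CutEdge (U₁ U₂ : List X) (lt : BRel) (a b : ℕ × ℕ) : Prop :=
  ∃ c, Cuts U₁ U₂ lt a c ∧ Mirrors U₁ U₂ lt c b

/-- `w 0, w 1, …, w n` is a cycle (of length `n ≥ 1`) in the cut graph. -/
def IsCycle (U₁ U₂ : List X) (lt : BRel) (n : ℕ) (w : ℕ → ℕ × ℕ) : Prop :=
  0 < n ∧ w n = w 0 ∧ ∀ k < n, CutEdge U₁ U₂ lt (w k) (w (k + 1))

/-- The cut graph `G_{U₁,U₂,<}` is acyclic. -/
def Acyclic (U₁ U₂ : List X) (lt : BRel) : Prop :=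
  ¬ ∃ n w, IsCycle U₁ U₂ lt n w

variable [DecidableEq X]

/-- Case I extended Nielsen transformation (here `x = U_{1,1}`, `y = U_{2,1}`,
and `T(y) = x`). -/
def NielsenI (U₁ U₂ : List X) (lt : BRel) (U₁' U₂' : List X) (lt' : BRel) : Prop :=
  ∃ x y : X, U₁.head? = some x ∧ U₂.head? = some y ∧
    Incomp lt (1, 1) (2, 1) ∧
    U₁' = (U₁.map fun z => if z = y then x else z).tail ∧
    U₂' = (U₂.map fun z => if z = y then x else z).tail ∧
    BoundaryOrder U₁' U₂' lt' ∧
    ∀ a b : ℕ × ℕ, EBoundary U₁' U₂' a → EBoundary U₁' U₂' b →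
      (lt' a b ↔ lt (a.1, a.2 + 1) (b.1, b.2 + 1))

/-- The substitution `T(x) = y x` (identity on other variables), applied to a word. -/
def expand (x y : X) (l : List X) : List X :=
  l.flatMap fun z => if z = x then [y, x] else [z]

/-- The map `μ(i,j) = j + #{j' ≤ j : U_{i,j'} = x} − 1` (as a map on boundaries),
where `x = U_{1,1}`. -/
def mu (U₁ U₂ : List X) (x : X) (b : ℕ × ℕ) : ℕ × ℕ :=
  (b.1, b.2 + ((word U₁ U₂ b.1).take b.2).count x - 1)

/-- The map `ν(i,j) = j − #{j' ≤ j : U'_{i,j'} = x} + 1` (as a map on boundaries),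
where `x = U_{1,1}`. -/
def nu (U₁' U₂' : List X) (x : X) (b : ℕ × ℕ) : ℕ × ℕ :=
  (b.1, b.2 - ((word U₁' U₂' b.1).take b.2).count x + 1)

/-- Membership in `B⁻ = B ∖ {(2,1)}`. -/
def Bminus (U₁ U₂ : List X) (b : ℕ × ℕ) : Prop := Boundary U₁ U₂ b ∧ b ≠ (2, 1)

/-- Membership in `B'⁻ = {(i, μ(i,j)) : (i,j) ∈ B⁻}` (`x = U_{1,1}`). -/
def Bpminus (U₁ U₂ : List X) (x : X) (b' : ℕ × ℕ) : Prop :=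
  ∃ b, Bminus U₁ U₂ b ∧ mu U₁ U₂ x b = b'

/-- Case II extended Nielsen transformation, with the heads `x = U_{1,1}`,
`y = U_{2,1}` made explicit. -/
def NielsenIIxy (U₁ U₂ : List X) (lt : BRel) (U₁' U₂' : List X) (lt' : BRel)
    (x y : X) : Prop :=
  U₁.head? = some x ∧ U₂.head? = some y ∧
  lt (2, 1) (1, 1) ∧
  U₁' = (expand x y U₁).tail ∧
  U₂' = (expand x y U₂).tail ∧
  BoundaryOrder U₁' U₂' lt' ∧
  ∀ a b, Bpminus U₁ U₂ x a → Bpminus U₁ U₂ x b →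
    (lt' a b ↔ lt (nu U₁' U₂' x a) (nu U₁' U₂' x b))

/-- Case II extended Nielsen transformation. -/
def NielsenII (U₁ U₂ : List X) (lt : BRel) (U₁' U₂' : List X) (lt' : BRel) : Prop :=
  ∃ x y : X, NielsenIIxy U₁ U₂ lt U₁' U₂' lt' x y

/-- The dual boundary order. -/
def dualRel (lt : BRel) : BRel := fun a b => lt (3 - a.1, a.2) (3 - b.1, b.2)

/-- Case III extended Nielsen transformation: case II applied to the dual,
then dualized back. -/
def NielsenIII (U₁ U₂ : List X) (lt : BRel) (U₁' U₂' : List X) (lt' : BRel) : Prop :=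
  NielsenII U₂ U₁ (dualRel lt) U₂' U₁' (dualRel lt')

/-- `(U₁', U₂', lt')` is an extended Nielsen transformation of the nontrivial coherent
extended word equation `(U₁, U₂, lt)`. -/
def ExtNielsen (U₁ U₂ : List X) (lt : BRel) (U₁' U₂' : List X) (lt' : BRel) : Prop :=
  U₁ ≠ [] ∧ U₂ ≠ [] ∧ BoundaryOrder U₁ U₂ lt ∧ Coherent U₁ U₂ lt ∧
    (NielsenI U₁ U₂ lt U₁' U₂' lt' ∨ NielsenII U₁ U₂ lt U₁' U₂' lt' ∨
      NielsenIII U₁ U₂ lt U₁' U₂' lt')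

/-- A coherent extended Nielsen transformation. -/
def CohNielsen (U₁ U₂ : List X) (lt : BRel) (U₁' U₂' : List X) (lt' : BRel) : Prop :=
  ExtNielsen U₁ U₂ lt U₁' U₂' lt' ∧ Coherent U₁' U₂' lt'

/-- `(U₁, U₂, lt)` is (strongly) terminating: there is no infinite sequence of coherent
extended Nielsen transformations starting from it. -/
def Terminating (U₁ U₂ : List X) (lt : BRel) : Prop :=
  ¬ ∃ f : ℕ → List X × List X × BRel,
    f 0 = (U₁, U₂, lt) ∧
    ∀ n, CohNielsen (f n).1 (f n).2.1 (f n).2.2 (f (n + 1)).1 (f (n + 1)).2.1 (f (n + 1)).2.2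


lemma expand_cons (x y a : X) (l : List X) :
    expand x y (a :: l) = (if a = x then [y, x] else [a]) ++ expand x y l := by
  simp [expand]

lemma expand_append (x y : X) (l₁ l₂ : List X) :
    expand x y (l₁ ++ l₂) = expand x y l₁ ++ expand x y l₂ := by
  simp [expand]

lemma expand_length (x y : X) (l : List X) :
    (expand x y l).length = l.length + l.count x := by
  induction l with
  | nil => rfl
  | cons a t ih =>
    rw [expand_cons]
    by_cases h : a = x <;> simp [h, ih, List.count_cons] <;> omega

lemma expand_count (x y : X) (hxy : y ≠ x) (l : List X) :
    (expand x y l).count x = l.count x := by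
  induction l with
  | nil => rfl
  | cons a t ih =>
    rw [expand_cons]
    by_cases h : a = x <;> simp [h, ih, List.count_cons, hxy]

lemma expand_dichotomy (x y : X) (V : List X) (k : ℕ) (hk1 : 1 ≤ k)
    (hk2 : k ≤ (expand x y V).length) :
    (∃ j, 1 ≤ j ∧ j ≤ V.length ∧ k = (expand x y (V.take j)).length) ∨
    (∃ q, q < V.length ∧ V[q]? = some x ∧ k = (expand x y (V.take q)).length + 1) := by
  induction V generalizing k with
  | nil => simp [expand] at hk2; omega
  | cons a t ih =>
    by_cases hax : a = x
    · match k, hk1 with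
      | 1, _ =>
        right; exact ⟨0, by simp, by simp [hax], by simp [expand]⟩
      | 2, _ =>
        left; exact ⟨1, le_refl _, by simp, by simp [expand, hax]⟩
      | (k+3), _ =>
        have h2 : (expand x y (a :: t)).length = 2 + (expand x y t).length := by
          rw [expand_cons]; simp [hax]; omega
        have := ih (k+1) (by omega) (by omega)
        rcases this with ⟨j, hj1, hj2, hj3⟩ | ⟨q, hq1, hq2, hq3⟩
        · left
          refine ⟨j + 1, by omega, by simpa using hj2, ?_⟩
          rw [List.take_succ_cons, expand_cons]; simp [hax]; omega
        · right
          refine ⟨q + 1, by simpa using hq1, by simpa using hq2, ?_⟩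
          rw [List.take_succ_cons, expand_cons]; simp [hax]; omega
    · match k, hk1 with
      | 1, _ =>
        left; exact ⟨1, le_refl _, by simp, by simp [expand, hax]⟩
      | (k+2), _ =>
        have h2 : (expand x y (a :: t)).length = 1 + (expand x y t).length := by
          rw [expand_cons]; simp [hax]; omega
        have := ih (k+1) (by omega) (by omega)
        rcases this with ⟨j, hj1, hj2, hj3⟩ | ⟨q, hq1, hq2, hq3⟩
        · left
          refine ⟨j + 1, by omega, by simpa using hj2, ?_⟩
          rw [List.take_succ_cons, expand_cons]; simp [hax]; omega
        · right
          refine ⟨q + 1, by simpa using hq1, by simpa using hq2, ?_⟩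
          rw [List.take_succ_cons, expand_cons]; simp [hax]; omega

lemma key (x y : X) (hxy : y ≠ x) (V V' : List X) (hV : expand x y V = y :: V')
    (j' : ℕ) (hj1 : 1 ≤ j') (hj2 : j' ≤ V'.length) :
    (∃ j, 1 ≤ j ∧ j ≤ V.length ∧ j + ((V.take j).count x) - 1 = j' ∧
      (2 ≤ j ∨ V.head? = some x)) ∨
    (∃ p, 2 ≤ p ∧ p ≤ V.length ∧ V[p-1]? = some x ∧
      j' - ((V'.take j').count x) + 1 = p) := by
  have hlen : (expand x y V).length = V'.length + 1 := by rw [hV]; simp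
  rcases expand_dichotomy x y V (j' + 1) (by omega) (by omega) with
    ⟨j, hj1', hj2', hj3'⟩ | ⟨q, hq1, hq2, hq3⟩
  · left
    have hlj : (expand x y (V.take j)).length = j + (V.take j).count x := by
      rw [expand_length]
      have : (V.take j).length = j := List.length_take_of_le hj2'
      omega
    refine ⟨j, hj1', hj2', by omega, ?_⟩
    by_cases h2j : 2 ≤ j
    · exact Or.inl h2j
    · right
      have hj1'' : j = 1 := by omega
      subst hj1''
      -- take 1 V = [V.head], count ≥ 1 since j' + 1 = 1 + count ≥ 2
      have hc : 1 ≤ (V.take 1).count x := by omega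
      obtain ⟨a, t, rfl⟩ : ∃ a t, V = a :: t := by
        cases V with
        | nil => simp at hj2'
        | cons a t => exact ⟨a, t, rfl⟩
      by_cases hax : a = x
      · simp [hax]
      · simp [hax] at hc
  · right
    have hq0 : 1 ≤ q := by
      rcases Nat.eq_zero_or_pos q with h | h
      · subst h; simp [expand] at hq3; omega
      · exact h
    refine ⟨q + 1, by omega, by omega, by simpa using hq2, ?_⟩
    -- compute the count
    have hVsplit : V = V.take q ++ x :: V.drop (q + 1) := by
      conv_lhs => rw [← List.take_append_drop q V]
      congr 1
      rw [← List.getElem_cons_drop hq1]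
      congr 1
      have := List.getElem?_eq_getElem hq1
      rw [hq2] at this
      exact (Option.some_injective _ this.symm)
    have hWsplit : expand x y V
        = expand x y (V.take q) ++ y :: x :: expand x y (V.drop (q+1)) := by
      conv_lhs => rw [hVsplit]
      rw [expand_append, expand_cons]
      simp
    have htake : (expand x y V).take (j' + 1) = expand x y (V.take q) ++ [y] := by
      have h1 : (expand x y (V.take q)).length = j' := by omega
      rw [hWsplit, List.take_append, h1,
        List.take_of_length_le (by omega)]
      simp
    have htake' : (expand x y V).take (j' + 1) = y :: V'.take j' := by
      rw [hV]; simp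
    have hcnt : (V'.take j').count x = (V.take q).count x := by
      have e1 : (y :: V'.take j').count x = (expand x y (V.take q) ++ [y]).count x := by
        rw [← htake', ← htake]
      simp [List.count_cons, List.count_append, hxy, expand_count x y hxy] at e1
      exact e1
    have hlq : (expand x y (V.take q)).length = q + (V.take q).count x := by
      rw [expand_length]
      have : (V.take q).length = q := List.length_take_of_le (by omega)
      omega
    omega

lemma lt_bot_chain {U₁ U₂ : List X} {lt : BRel} (hbo : BoundaryOrder U₁ U₂ lt)
    (i m : ℕ) (hi : i = 1 ∨ i = 2) (hm1 : 1 ≤ m) (hm2 : m ≤ (word U₁ U₂ i).length) :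
    lt (1, 0) (i, m) := by
  have eb : ∀ k, k ≤ (word U₁ U₂ i).length → EBoundary U₁ U₂ (i, k) := fun k hk => ⟨hi, hk⟩
  have hchain : ∀ n, 1 ≤ n → n ≤ (word U₁ U₂ i).length → lt (i, 0) (i, n) := by
    intro n
    induction n with
    | zero => omega
    | succ n ih =>
      intro _ hle
      rcases Nat.eq_zero_or_pos n with h | h
      · subst h; exact hbo.succ i 0 (eb 1 hle)
      · exact hbo.trans (i,0) (i,n) (i,n+1) (eb 0 (by omega)) (eb n (by omega)) (eb (n+1) hle)
          (ih h (by omega)) (hbo.succ i n (eb (n+1) hle))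
  have hchain := hchain m hm1 hm2
  rcases hi with rfl | rfl
  · exact hchain
  · have eb1 : EBoundary U₁ U₂ (1, 0) := ⟨Or.inl rfl, Nat.zero_le _⟩
    have eb2 : EBoundary U₁ U₂ (2, 0) := ⟨Or.inr rfl, Nat.zero_le _⟩
    have ebm : EBoundary U₁ U₂ (2, m) := ⟨Or.inr rfl, hm2⟩
    by_contra h
    by_cases h2 : lt (2, m) (1, 0)
    · exact (hbo.bot).2 (hbo.trans (2,0) (2,m) (1,0) eb2 ebm eb1 hchain h2)
    · exact absurd hchain
        (hbo.incomp_trans (2,0) (1,0) (2,m) eb2 eb1 ebm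
          ⟨hbo.bot.2, hbo.bot.1⟩ ⟨h, h2⟩).1

/-- **Lemma.** After a case II coherent extended Nielsen transformation, every
boundary `(i,j) ∈ B'⁺` satisfies: `(i,ν(i,j))` mirrors `(1,1)` with respect to
`(U₁,U₂,<)`. -/
theorem mirrors_one_one_of_mem_Bpplus (U₁ U₂ U₁' U₂' : List X) (lt lt' : BRel)
    (x y : X)
    (h₁ : U₁ ≠ []) (h₂ : U₂ ≠ []) (hbo : BoundaryOrder U₁ U₂ lt)
    (hcoh : Coherent U₁ U₂ lt)
    (hII : NielsenIIxy U₁ U₂ lt U₁' U₂' lt' x y) (hcoh' : Coherent U₁' U₂' lt') :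
    ∀ b, Boundary U₁' U₂' b → ¬ Bpminus U₁ U₂ x b →
      Mirrors U₁ U₂ lt (nu U₁' U₂' x b) (1, 1) := by
  obtain ⟨hx, hy, hlt21, hU1', hU2', hbo', hord⟩ := hII
  obtain ⟨t, rfl⟩ : ∃ t, U₁ = x :: t := by
    cases U₁ with
    | nil => exact absurd hx (by simp)
    | cons a t =>
      simp only [List.head?_cons, Option.some.injEq] at hx
      exact ⟨t, by rw [hx]⟩
  obtain ⟨s, rfl⟩ : ∃ s, U₂ = y :: s := by
    cases U₂ with
    | nil => exact absurd hy (by simp)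
    | cons a s =>
      simp only [List.head?_cons, Option.some.injEq] at hy
      exact ⟨s, by rw [hy]⟩
  have hb11 : Boundary (x :: t) (y :: s) (1, 1) := ⟨Or.inl rfl, le_refl _, by simp [word]⟩
  have hb21 : Boundary (x :: t) (y :: s) (2, 1) := ⟨Or.inr rfl, le_refl _, by simp [word]⟩
  have hyx : y ≠ x := by
    obtain ⟨L, hL, hiff⟩ := hcoh
    have hlen := (hiff (2,1) (1,1) hb21 hb11).mp hlt21
    simp [prefixLen, word] at hlen
    intro h; rw [h] at hlen; omega
  have hexp1 : expand x y (x :: t) = y :: U₁' := by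
    rw [hU1', expand_cons, if_pos rfl]
    rfl
  have hexp2 : expand x y (y :: s) = y :: U₂' := by
    rw [hU2', expand_cons, if_neg hyx]
    rfl
  rintro ⟨i, j'⟩ ⟨hi, hj1, hj2⟩ hnb
  rcases hi with rfl | rfl
  · -- i = 1
    have hj2' : j' ≤ U₁'.length := by simpa [word] using hj2
    rcases key x y hyx (x :: t) U₁' hexp1 j' hj1 hj2' with
      ⟨j, hjj1, hjj2, hjj3, _⟩ | ⟨p, hp2, hpl, hpx, hpn⟩
    · exact absurd ⟨(1, j), ⟨⟨Or.inl rfl, hjj1, by simpa [word] using hjj2⟩, by simp⟩,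
        by simp only [mu, word]; simpa using hjj3⟩ hnb
    · have hnu : nu U₁' U₂' x (1, j') = (1, p) := by
        simp [nu, word]; omega
      rw [hnu]
      refine ⟨⟨Or.inl rfl, by omega, by simpa [word] using hpl⟩, hb11, ?_, Or.inr ?_⟩
      · simpa [letter, word] using hpx
      · intro hinc
        have hgoal : p - 1 ≤ (word (x :: t) (y :: s) 1).length := by
          simp only [List.length_cons] at hpl; simp [word]; omega
        exact hinc.2 (lt_bot_chain hbo 1 (p - 1) (Or.inl rfl) (by omega) hgoal)
  · -- i = 2
    have hj2' : j' ≤ U₂'.length := by simpa [word] using hj2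
    rcases key x y hyx (y :: s) U₂' hexp2 j' hj1 hj2' with
      ⟨j, hjj1, hjj2, hjj3, hor⟩ | ⟨p, hp2, hpl, hpx, hpn⟩
    · have hj2le : 2 ≤ j := by
        rcases hor with h | h
        · exact h
        · simp at h; exact absurd h hyx
      exact absurd ⟨(2, j), ⟨⟨Or.inr rfl, hjj1, by simpa [word] using hjj2⟩, by
        simp only [ne_eq, Prod.mk.injEq]; omega⟩,
        by simp only [mu, word]; simpa using hjj3⟩ hnb
    · have hnu : nu U₁' U₂' x (2, j') = (2, p) := by
        simp [nu, word]; omega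
      rw [hnu]
      refine ⟨⟨Or.inr rfl, by omega, by simpa [word] using hpl⟩, hb11, ?_, Or.inr ?_⟩
      · simpa [letter, word] using hpx
      · intro hinc
        have hgoal : p - 1 ≤ (word (x :: t) (y :: s) 2).length := by
          simp only [List.length_cons] at hpl; simp [word]; omega
        exact hinc.2 (lt_bot_chain hbo 2 (p - 1) (Or.inr rfl) (by omega) hgoal)


end ExtWordEq
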